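/- Let R be a commutative ring, q ∈ R, A an associative unital R-algebra, and a, b ∈ A satisfying the q-commutation relation a*b - q•(b*a) = 1. Then for every natural number n, the normal-ordering expansion holds: (b*a)^n = \sum_{k=0}^{n} S_q(n,k) • (b^k * a^k). -/

import Mathlib

/-- The q-integer [n]_q. -/
def qInt {R : Type*} [CommRing R] (q : R) (n : ℕ) : R :=
  ∑ i ∈ Finset.range n, q ^ i

/-- The q-Stirling numbers of the second kind. -/
def qStirling {R : Type*} [CommRing R] (q : R) : ℕ → ℕ → R
  | 0, 0 => 1
  | 0, _ + 1 => 0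
  | _ + 1, 0 => 0
  | n + 1, k + 1 => q ^ k * qStirling q n k + qInt q (k + 1) * qStirling q n (k + 1)

lemma qStirling_eq_zero {R : Type*} [CommRing R] (q : R) :
    ∀ n k, n < k → qStirling q n k = 0 := by
  intro n
  induction n with
  | zero => intro k hk; match k, hk with | k + 1, _ => rfl
  | succ n ih =>
    intro k hk
    match k, hk with
    | k + 1, hk =>
      have h1 : n < k := Nat.lt_of_succ_lt_succ hk
      rw [qStirling, ih k h1, ih (k + 1) (h1.trans (Nat.lt_succ_self k)), mul_zero,
        mul_zero, add_zero]

lemma qInt_succ {R : Type*} [CommRing R] (q : R) (k : ℕ) :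
    qInt q (k + 1) = qInt q k + q ^ k := by
  simp [qInt, Finset.sum_range_succ]

lemma hab_lemma {R : Type*} [CommRing R] (q : R) {A : Type*} [Ring A]
    [Algebra R A] (a b : A) (h : a * b - q • (b * a) = 1) (k : ℕ) :
    a * b ^ (k + 1) = q ^ (k + 1) • (b ^ (k + 1) * a) + qInt q (k + 1) • b ^ k := by
  have h' : a * b = 1 + q • (b * a) := by rw [← h]; abel
  induction k with
  | zero =>
    have h1 : qInt q 1 = 1 := by simp [qInt]
    simp only [zero_add, pow_one, pow_zero, h1, one_smul, h']
    abel
  | succ k ih =>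
    have e1 : a * b ^ (k + 2) = (a * b ^ (k + 1)) * b := by rw [pow_succ, mul_assoc]
    rw [e1, ih, add_mul, smul_mul_assoc, smul_mul_assoc, mul_assoc, h']
    simp only [mul_add, mul_one, mul_smul_comm, smul_add, smul_smul, qInt_succ,
      pow_succ, add_smul, mul_assoc]
    module

theorem key {R : Type*} [CommRing R] (q : R) {A : Type*} [Ring A]
    [Algebra R A] (a b : A) (h : a * b - q • (b * a) = 1) (k : ℕ) :
    (b * a) * (b ^ k * a ^ k) = q ^ k • (b ^ (k + 1) * a ^ (k + 1))
      + qInt q k • (b ^ k * a ^ k) := by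
  cases k with
  | zero => simp [qInt]
  | succ k =>
    have e1 : b * a * (b ^ (k + 1) * a ^ (k + 1)) = b * (a * b ^ (k + 1)) * a ^ (k + 1) := by
      noncomm_ring
    rw [e1, hab_lemma q a b h k, mul_add, add_mul, mul_smul_comm, mul_smul_comm,
      smul_mul_assoc, smul_mul_assoc, ← mul_assoc, ← pow_succ' b (k + 1), mul_assoc,
      ← pow_succ' a (k + 1), ← pow_succ' b k]

/-- Normal-ordering expansion of (b a)^n via q-Stirling numbers. -/
theorem qBoson_normal_order {R : Type*} [CommRing R] (q : R) {A : Type*} [Ring A]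
    [Algebra R A] (a b : A) (h : a * b - q • (b * a) = 1) (n : ℕ) :
    (b * a) ^ n = ∑ k ∈ Finset.range (n + 1), qStirling q n k • (b ^ k * a ^ k) := by
  induction n with
  | zero => simp [qStirling]
  | succ n ih =>
    have lhs : (b * a) ^ (n + 1)
        = ∑ k ∈ Finset.range (n + 1),
            ((q ^ k * qStirling q n k) • (b ^ (k + 1) * a ^ (k + 1))
              + (qInt q k * qStirling q n k) • (b ^ k * a ^ k)) := by
      rw [pow_succ', ih, Finset.mul_sum]
      refine Finset.sum_congr rfl fun k _ => ?_
      rw [mul_smul_comm, key q a b h k, smul_add, smul_smul, smul_smul]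
      ring_nf
    rw [lhs, Finset.sum_add_distrib]
    have rhs : ∑ k ∈ Finset.range (n + 2), qStirling q (n + 1) k • (b ^ k * a ^ k)
        = ∑ k ∈ Finset.range (n + 1),
            ((q ^ k * qStirling q n k) • (b ^ (k + 1) * a ^ (k + 1))
              + (qInt q (k + 1) * qStirling q n (k + 1)) • (b ^ (k + 1) * a ^ (k + 1))) := by
      rw [Finset.sum_range_succ']
      simp only [qStirling, add_smul, mul_comm]
      simp [qStirling]
    rw [rhs, Finset.sum_add_distrib]
    congr 1
    have zn : (qInt q (n + 1) * qStirling q n (n + 1)) • (b ^ (n + 1) * a ^ (n + 1)) = 0 := by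
      rw [qStirling_eq_zero q n (n + 1) (Nat.lt_succ_self n), mul_zero, zero_smul]
    have z0 : (qInt q 0 * qStirling q n 0) • (b ^ 0 * a ^ 0) = 0 := by
      simp [qInt]
    calc ∑ k ∈ Finset.range (n + 1), (qInt q k * qStirling q n k) • (b ^ k * a ^ k)
        = ∑ k ∈ Finset.range (n + 2), (qInt q k * qStirling q n k) • (b ^ k * a ^ k) := by
          conv_rhs => rw [Finset.sum_range_succ]
          rw [zn, add_zero]
      _ = ∑ k ∈ Finset.range (n + 1),
            (qInt q (k + 1) * qStirling q n (k + 1)) • (b ^ (k + 1) * a ^ (k + 1)) := by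
          rw [Finset.sum_range_succ', z0, add_zero]
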